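/- Let Φ be a completely positive trace-preserving map on M_n, let A be a *-subalgebra of M_n, and let π : A → M_n be a linear multiplicative *-preserving map such that Φ(AX) = π(A)Φ(X) for all A ∈ A and all X ∈ M_n. Then Φ†(π(A)) = A for all A ∈ A, where Φ† is the trace-inner-product adjoint of Φ. -/
import Mathlib


open Matrix ComplexOrder

/-- The completely positive map with Kraus operators `V i`. -/
noncomputable def krausMap {d n m : ℕ} (V : Fin d → Matrix (Fin m) (Fin n) ℂ) :
    Matrix (Fin n) (Fin n) ℂ →ₗ[ℂ] Matrix (Fin m) (Fin m) ℂ where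
  toFun X := ∑ i, V i * X * (V i)ᴴ
  map_add' X Y := by simp [Matrix.mul_add, Matrix.add_mul, Finset.sum_add_distrib]
  map_smul' c X := by simp [Matrix.mul_smul, Matrix.smul_mul, Finset.smul_sum]

/-- The complementary map `Φ^C(ρ) = ∑_{i,j} tr(ρ V_j* V_i) E_{ij}`. -/
noncomputable def complMap {d n m : ℕ} (V : Fin d → Matrix (Fin m) (Fin n) ℂ) :
    Matrix (Fin n) (Fin n) ℂ →ₗ[ℂ] Matrix (Fin d) (Fin d) ℂ where
  toFun X := Matrix.of fun i j => (X * ((V j)ᴴ * V i)).trace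
  map_add' X Y := by
    ext i j
    simp [Matrix.add_mul]
  map_smul' c X := by
    ext i j
    simp [Matrix.smul_mul]

/-- The compression map `P_Q(X) = Q X Q`. -/
noncomputable def comprMap {n : ℕ} (Q : Matrix (Fin n) (Fin n) ℂ) :
    Matrix (Fin n) (Fin n) ℂ →ₗ[ℂ] Matrix (Fin n) (Fin n) ℂ where
  toFun X := Q * X * Q
  map_add' X Y := by simp [Matrix.mul_add, Matrix.add_mul]
  map_smul' c X := by simp [Matrix.mul_smul, Matrix.smul_mul]

/-- The orthogonal complement of a set of matrices with respect to the trace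
(Hilbert–Schmidt) inner product `⟨A, B⟩ = tr(A* B)`. -/
noncomputable def traceOrthCompl {n : ℕ} (S : Set (Matrix (Fin n) (Fin n) ℂ)) :
    Submodule ℂ (Matrix (Fin n) (Fin n) ℂ) where
  carrier := {X | ∀ A ∈ S, (Aᴴ * X).trace = 0}
  add_mem' := by
    intro a b ha hb A hA
    simp [Matrix.mul_add, ha A hA, hb A hA]
  zero_mem' := by intro A hA; simp
  smul_mem' := by
    intro c x hx A hA
    simp [Matrix.mul_smul, hx A hA]

/-- The commutant of a set of matrices, as a submodule of `M_n`. -/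
noncomputable def commutantSub {n : ℕ} (S : Set (Matrix (Fin n) (Fin n) ℂ)) :
    Submodule ℂ (Matrix (Fin n) (Fin n) ℂ) where
  carrier := {X | ∀ A ∈ S, X * A = A * X}
  add_mem' := by
    intro a b ha hb A hA
    simp [Matrix.mul_add, Matrix.add_mul, ha A hA, hb A hA]
  zero_mem' := by intro A hA; simp
  smul_mem' := by
    intro c x hx A hA
    simp [Matrix.mul_smul, Matrix.smul_mul, hx A hA]

/-- The multiplicative domain of a linear map on `M_n`, as a set. -/
noncomputable def multDomain {n m : ℕ}
    (Φ : Matrix (Fin n) (Fin n) ℂ →ₗ[ℂ] Matrix (Fin m) (Fin m) ℂ) :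
    Set (Matrix (Fin n) (Fin n) ℂ) :=
  {A | ∀ X, Φ (A * X) = Φ A * Φ X ∧ Φ (X * A) = Φ X * Φ A}

/-- if `π` is a *-homomorphism on the *-subalgebra `A` with
`Φ(AX) = π(A)Φ(X)` for all `A ∈ A`, `X ∈ M_n`, then `Φ†(π(A)) = A` for all `A ∈ A`. -/
theorem stmt_5 {d n : ℕ} (V : Fin d → Matrix (Fin n) (Fin n) ℂ)
    (hV : ∑ i, (V i)ᴴ * V i = 1)
    (A : NonUnitalStarSubalgebra ℂ (Matrix (Fin n) (Fin n) ℂ))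
    (π : A →ₗ[ℂ] Matrix (Fin n) (Fin n) ℂ)
    (hπmul : ∀ a b : A, π (a * b) = π a * π b)
    (hπstar : ∀ a : A, π (star a) = (π a)ᴴ)
    (hcov : ∀ (a : A) (X : Matrix (Fin n) (Fin n) ℂ),
      krausMap V ((a : Matrix (Fin n) (Fin n) ℂ) * X) = π a * krausMap V X) :
    ∀ a : A, ∑ i, (V i)ᴴ * π a * V i = (a : Matrix (Fin n) (Fin n) ℂ) := by
  intro a
  set P := π a with hP
  have hkr : ∀ X : Matrix (Fin n) (Fin n) ℂ, krausMap V X = ∑ i, V i * X * (V i)ᴴ := by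
    intro X; rfl
  have hstarco : ((star a : A) : Matrix (Fin n) (Fin n) ℂ) = ((a : Matrix (Fin n) (Fin n) ℂ))ᴴ := rfl
  -- Φ(a) = P Φ(1)
  have hΦa : krausMap V ((a : Matrix (Fin n) (Fin n) ℂ)) = P * krausMap V 1 := by
    simpa using hcov a 1
  -- Φ(a*) = Pᴴ Φ(1)
  have hΦas : krausMap V (((a : Matrix (Fin n) (Fin n) ℂ))ᴴ) = Pᴴ * krausMap V 1 := by
    have := hcov (star a) 1
    simpa [hπstar, hstarco, hP] using this
  -- Φ(a a*) = P Pᴴ Φ(1)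
  have hΦaas : krausMap V ((a : Matrix (Fin n) (Fin n) ℂ) * ((a : Matrix (Fin n) (Fin n) ℂ))ᴴ)
      = P * (Pᴴ * krausMap V 1) := by
    rw [← hstarco, hcov a _, hstarco, hΦas]
  -- the sum of positive matrices ∑ (V i a - P V i)(V i a - P V i)ᴴ equals 0
  set M : Fin d → Matrix (Fin n) (Fin n) ℂ :=
    fun i => V i * (a : Matrix (Fin n) (Fin n) ℂ) - P * V i with hM
  have hS : ∑ i, M i * (M i)ᴴ = 0 := by
    have expand : ∀ i, M i * (M i)ᴴ =
        V i * ((a : Matrix (Fin n) (Fin n) ℂ) * ((a : Matrix (Fin n) (Fin n) ℂ))ᴴ) * (V i)ᴴ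
        - (V i * (a : Matrix (Fin n) (Fin n) ℂ) * (V i)ᴴ) * Pᴴ
        - P * (V i * ((a : Matrix (Fin n) (Fin n) ℂ))ᴴ * (V i)ᴴ)
        + P * (V i * 1 * (V i)ᴴ) * Pᴴ := by
      intro i
      simp only [hM, Matrix.conjTranspose_sub, Matrix.conjTranspose_mul]
      noncomm_ring
    calc ∑ i, M i * (M i)ᴴ
        = krausMap V ((a : Matrix (Fin n) (Fin n) ℂ) * ((a : Matrix (Fin n) (Fin n) ℂ))ᴴ)
          - krausMap V ((a : Matrix (Fin n) (Fin n) ℂ)) * Pᴴ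
          - P * krausMap V (((a : Matrix (Fin n) (Fin n) ℂ))ᴴ)
          + P * krausMap V 1 * Pᴴ := by
          simp only [expand, hkr, Finset.sum_add_distrib, Finset.sum_sub_distrib,
            Finset.mul_sum, Finset.sum_mul]
      _ = 0 := by
          rw [hΦa, hΦas, hΦaas]
          noncomm_ring
  -- taking traces : each M i = 0
  have hMzero : ∀ i, M i = 0 := by
    have htr : (∑ i, M i * (M i)ᴴ).trace = 0 := by rw [hS]; simp
    have htr2 : (∑ i, ∑ p, ∑ q, Complex.normSq (M i p q) : ℂ) = 0 := by
      rw [← htr, Matrix.trace_sum]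
      push_cast
      refine Finset.sum_congr rfl fun i _ => ?_
      rw [Matrix.trace]
      refine Finset.sum_congr rfl fun p _ => ?_
      simp [Matrix.mul_apply, Matrix.conjTranspose_apply, Complex.mul_conj]
    have htr3 : (∑ i, ∑ p, ∑ q, Complex.normSq (M i p q)) = 0 := by
      exact_mod_cast htr2
    have hnn : ∀ i ∈ Finset.univ, (0:ℝ) ≤ ∑ p, ∑ q, Complex.normSq (M i p q) :=
      fun i _ => Finset.sum_nonneg fun p _ => Finset.sum_nonneg fun q _ =>
        Complex.normSq_nonneg _
    intro i
    have h1 := (Finset.sum_eq_zero_iff_of_nonneg hnn).1 htr3 i (Finset.mem_univ i)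
    ext p q
    have h2 := (Finset.sum_eq_zero_iff_of_nonneg
      (fun p _ => Finset.sum_nonneg fun q _ => Complex.normSq_nonneg (M i p q))).1 h1 p
      (Finset.mem_univ p)
    have h3 := (Finset.sum_eq_zero_iff_of_nonneg
      (fun q _ => Complex.normSq_nonneg (M i p q))).1 h2 q (Finset.mem_univ q)
    simpa [Complex.normSq_eq_zero] using h3
  -- conclude
  have hcomm : ∀ i, P * V i = V i * (a : Matrix (Fin n) (Fin n) ℂ) := by
    intro i
    have := hMzero i
    rw [hM] at this
    linear_combination (norm := noncomm_ring) -this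
  calc ∑ i, (V i)ᴴ * P * V i
      = ∑ i, (V i)ᴴ * V i * (a : Matrix (Fin n) (Fin n) ℂ) := by
        refine Finset.sum_congr rfl fun i _ => ?_
        rw [Matrix.mul_assoc, hcomm i, ← Matrix.mul_assoc]
    _ = (a : Matrix (Fin n) (Fin n) ℂ) := by
        rw [← Finset.sum_mul, hV, Matrix.one_mul]
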